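/- arXiv:1512.07725 — 4 statements merged into one kernel-verified Lean document; each statement's English description precedes it below -/
import Mathlib

section
/- Let λ < 0, let D ⊆ ℝⁿ be open, and let u : ℝⁿ → ℝ be twice continuously differentiable on D. Define ū(x, x') = u(x)·cosh(√(−2λ)·x'). Then u satisfies (1/2)Δu(x) = λ·u(x) for all x ∈ D if and only if ū is harmonic on D × ℝ, i.e. Δū(x, x') = 0 for all (x, x') ∈ D × ℝ. -/
open scoped BigOperators
open Topology Filter

/-- The Laplacian of `u : ℝⁿ → ℝ` at `x`: the sum of second partial derivatives with respect
to the standard orthonormal basis. -/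
noncomputable def lap {n : ℕ} (u : EuclideanSpace ℝ (Fin n) → ℝ)
    (x : EuclideanSpace ℝ (Fin n)) : ℝ :=
  ∑ i, iteratedFDeriv ℝ 2 u x ![EuclideanSpace.single i 1, EuclideanSpace.single i 1]

/-- The Laplacian on `ℝⁿ × ℝ ≅ ℝⁿ⁺¹`: the sum `Δ_x + ∂²/∂x'²` of second partial derivatives
with respect to the standard orthonormal basis of `ℝⁿ × ℝ`. -/
noncomputable def lapProd {n : ℕ} (F : EuclideanSpace ℝ (Fin n) × ℝ → ℝ)
    (p : EuclideanSpace ℝ (Fin n) × ℝ) : ℝ :=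
  (∑ i, iteratedFDeriv ℝ 2 F p
      ![(EuclideanSpace.single i 1, (0 : ℝ)), (EuclideanSpace.single i 1, (0 : ℝ))])
    + iteratedFDeriv ℝ 2 F p
        ![((0 : EuclideanSpace ℝ (Fin n)), (1 : ℝ)), ((0 : EuclideanSpace ℝ (Fin n)), (1 : ℝ))]

lemma second_eq {E : Type*} [NormedAddCommGroup E] [NormedSpace ℝ E] {f : E → ℝ} {x : E}
    (hf : ContDiffAt ℝ 2 f x) (m : E) :
    iteratedFDeriv ℝ 2 f x ![m, m] = fderiv ℝ (fun y => fderiv ℝ f y m) x m := by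
  have hd : DifferentiableAt ℝ (fderiv ℝ f) x :=
    (hf.fderiv_right (m := 1) (by norm_num)).differentiableAt one_ne_zero
  have h2 := (hd.hasFDerivAt.clm_apply (hasFDerivAt_const m x)).fderiv
  rw [iteratedFDeriv_two_apply, h2]
  simp

theorem stmt4 {n : ℕ} (lam : ℝ) (hlam : lam < 0) (D : Set (EuclideanSpace ℝ (Fin n)))
    (hD : IsOpen D) (u : EuclideanSpace ℝ (Fin n) → ℝ) (hu : ContDiffOn ℝ 2 u D) :
    (∀ x ∈ D, (1 / 2) * lap u x = lam * u x) ↔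
      ∀ p ∈ D ×ˢ (Set.univ : Set ℝ),
        lapProd (fun q => u q.1 * Real.cosh (Real.sqrt (-(2 * lam)) * q.2)) p = 0 := by
  set c := Real.sqrt (-(2 * lam)) with hc
  have hc2 : c * c = -(2 * lam) := Real.mul_self_sqrt (by linarith)
  set F : (EuclideanSpace ℝ (Fin n)) × ℝ → ℝ := fun q => u q.1 * Real.cosh (c * q.2) with hFdef
  -- derivative of t ↦ cosh (c t) and t ↦ sinh (c t)
  have hcosh : ∀ s : ℝ, HasDerivAt (fun r : ℝ => Real.cosh (c * r)) (Real.sinh (c * s) * c) s := by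
    intro s
    have := (Real.hasDerivAt_cosh (c * s)).comp s ((hasDerivAt_id s).const_mul c)
    simpa [Function.comp_def, mul_one] using this
  have hsinh : ∀ s : ℝ, HasDerivAt (fun r : ℝ => Real.sinh (c * r)) (Real.cosh (c * s) * c) s := by
    intro s
    have := (Real.hasDerivAt_sinh (c * s)).comp s ((hasDerivAt_id s).const_mul c)
    simpa [Function.comp_def, mul_one] using this
  have hQcosh : ∀ q : (EuclideanSpace ℝ (Fin n)) × ℝ, HasFDerivAt (fun q : (EuclideanSpace ℝ (Fin n)) × ℝ => Real.cosh (c * q.2))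
      ((Real.sinh (c * q.2) * c) • ContinuousLinearMap.snd ℝ (EuclideanSpace ℝ (Fin n)) ℝ) q := by
    intro q
    exact (hcosh q.2).comp_hasFDerivAt q hasFDerivAt_snd
  have hu' : ∀ q : (EuclideanSpace ℝ (Fin n)) × ℝ, q.1 ∈ D → HasFDerivAt (fun q : (EuclideanSpace ℝ (Fin n)) × ℝ => u q.1)
      ((fderiv ℝ u q.1).comp (ContinuousLinearMap.fst ℝ (EuclideanSpace ℝ (Fin n)) ℝ)) q := by
    intro q hq
    exact (((hu.contDiffAt (hD.mem_nhds hq)).differentiableAt (by norm_num)).hasFDerivAt).comp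
      q hasFDerivAt_fst
  have hF' : ∀ q : (EuclideanSpace ℝ (Fin n)) × ℝ, q.1 ∈ D → HasFDerivAt F
      (u q.1 • ((Real.sinh (c * q.2) * c) • ContinuousLinearMap.snd ℝ (EuclideanSpace ℝ (Fin n)) ℝ)
        + Real.cosh (c * q.2) • ((fderiv ℝ u q.1).comp (ContinuousLinearMap.fst ℝ (EuclideanSpace ℝ (Fin n)) ℝ))) q :=
    fun q hq => (hu' q hq).mul (hQcosh q)
  have key : ∀ x ∈ D, ∀ t : ℝ,
      lapProd F (x, t) = Real.cosh (c * t) * (lap u x - 2 * lam * u x) := by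
    intro x hx t
    have hux : ContDiffAt ℝ 2 u x := hu.contDiffAt (hD.mem_nhds hx)
    have hmem : D ×ˢ (Set.univ : Set ℝ) ∈ 𝓝 ((x, t) : (EuclideanSpace ℝ (Fin n)) × ℝ) :=
      (hD.prod isOpen_univ).mem_nhds (by simp [hx])
    have hFx : ContDiffAt ℝ 2 F (x, t) := by
      exact (hux.comp (x, t) contDiffAt_fst).mul
        ((Real.contDiff_cosh.comp (contDiff_const.mul contDiff_snd)).contDiffAt)
    have hdu1 : DifferentiableAt ℝ (fderiv ℝ u) x :=
      (hux.fderiv_right (m := 1) (by norm_num)).differentiableAt one_ne_zero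
    -- horizontal second derivatives
    have hAv : ∀ v : EuclideanSpace ℝ (Fin n), iteratedFDeriv ℝ 2 F (x, t) ![(v, (0:ℝ)), (v, (0:ℝ))]
        = Real.cosh (c * t) * iteratedFDeriv ℝ 2 u x ![v, v] := by
      intro v
      rw [second_eq hFx (v, (0:ℝ)), second_eq hux v]
      have hev : (fun q : (EuclideanSpace ℝ (Fin n)) × ℝ => fderiv ℝ F q (v, (0:ℝ)))
          =ᶠ[𝓝 ((x, t) : (EuclideanSpace ℝ (Fin n)) × ℝ)] (fun q => Real.cosh (c * q.2) * fderiv ℝ u q.1 v) := by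
        filter_upwards [hmem] with q hq
        rw [(hF' q hq.1).fderiv]
        simp
      rw [hev.fderiv_eq]
      have hdu2 : HasFDerivAt (fun y : EuclideanSpace ℝ (Fin n) => fderiv ℝ u y v)
          ((fderiv ℝ u x).comp (0 : EuclideanSpace ℝ (Fin n) →L[ℝ] EuclideanSpace ℝ (Fin n)) + (fderiv ℝ (fderiv ℝ u) x).flip v) x :=
        hdu1.hasFDerivAt.clm_apply (hasFDerivAt_const v x)
      rw [hdu2.fderiv]
      have hB : HasFDerivAt (fun q : (EuclideanSpace ℝ (Fin n)) × ℝ => fderiv ℝ u q.1 v)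
          (((fderiv ℝ u x).comp (0 : EuclideanSpace ℝ (Fin n) →L[ℝ] EuclideanSpace ℝ (Fin n)) + (fderiv ℝ (fderiv ℝ u) x).flip v).comp
            (ContinuousLinearMap.fst ℝ (EuclideanSpace ℝ (Fin n)) ℝ)) (x, t) :=
        by have := hdu2.comp (f := Prod.fst) ((x, t) : (EuclideanSpace ℝ (Fin n)) × ℝ) hasFDerivAt_fst; exact this
      rw [(show HasFDerivAt (fun q : (EuclideanSpace ℝ (Fin n)) × ℝ => Real.cosh (c * q.2) * fderiv ℝ u q.1 v) _ (x, t) from (hQcosh (x, t)).mul hB).fderiv]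
      simp
    have hBt : iteratedFDeriv ℝ 2 F (x, t)
        ![((0 : EuclideanSpace ℝ (Fin n)), (1:ℝ)), ((0 : EuclideanSpace ℝ (Fin n)), (1:ℝ))] = u x * (c * (Real.cosh (c * t) * c)) := by
      rw [second_eq hFx ((0 : EuclideanSpace ℝ (Fin n)), (1:ℝ))]
      have hev : (fun q : (EuclideanSpace ℝ (Fin n)) × ℝ => fderiv ℝ F q ((0 : EuclideanSpace ℝ (Fin n)), (1:ℝ)))
          =ᶠ[𝓝 ((x, t) : (EuclideanSpace ℝ (Fin n)) × ℝ)] (fun q => u q.1 * (c * Real.sinh (c * q.2))) := by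
        filter_upwards [hmem] with q hq
        rw [(hF' q hq.1).fderiv]
        simp
        exact Or.inl (mul_comm _ _)
      rw [hev.fderiv_eq]
      have hS : HasFDerivAt (fun q : (EuclideanSpace ℝ (Fin n)) × ℝ => c * Real.sinh (c * q.2))
          ((c * (Real.cosh (c * t) * c)) • ContinuousLinearMap.snd ℝ (EuclideanSpace ℝ (Fin n)) ℝ) (x, t) := by
        have h1 : HasDerivAt (fun r : ℝ => c * Real.sinh (c * r)) (c * (Real.cosh (c * t) * c)) t :=
          (hsinh t).const_mul c
        have := h1.comp_hasFDerivAt (f := Prod.snd) ((x, t) : (EuclideanSpace ℝ (Fin n)) × ℝ) (hasFDerivAt_snd (𝕜 := ℝ) (p := ((x, t) : (EuclideanSpace ℝ (Fin n)) × ℝ))); exact this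
      rw [(show HasFDerivAt (fun q : (EuclideanSpace ℝ (Fin n)) × ℝ => u q.1 * (c * Real.sinh (c * q.2))) _ (x, t) from (hu' (x, t) hx).mul hS).fderiv]
      simp
    unfold lapProd
    rw [hBt]
    rw [Finset.sum_congr rfl (fun i _ => hAv (EuclideanSpace.single i 1)), ← Finset.mul_sum]
    unfold lap
    linear_combination (Real.cosh (c * t) * u x) * hc2
  constructor
  · rintro h ⟨x, t⟩ hp
    rw [key x hp.1 t]
    have := h x hp.1
    have h0 : lap u x - 2 * lam * u x = 0 := by linarith
    rw [h0, mul_zero]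
  · intro h x hx
    have := h (x, 0) (by simp [hx])
    rw [key x hx 0] at this
    have h0 : lap u x - 2 * lam * u x = 0 := by
      rcases mul_eq_zero.mp this with h1 | h1
      · exact absurd h1 (ne_of_gt (Real.cosh_pos _))
      · exact h1
    linarith
end

section
/- (Duffin correspondence, Yukawa case, deterministic form.) Let λ > 0, let D ⊆ ℝⁿ be open, let f : ℝⁿ → ℝ, and let u : ℝⁿ → ℝ be twice continuously differentiable on D. Define ū(x,x') = u(x)·cos(√(2λ)·x'), f̄(y,y') = f(y)·cos(√(2λ)·y'), and I(λ) = (−π/(2√(2λ)), π/(2√(2λ))). Then the following are equivalent: (i) (1/2)Δu(x) − λu(x) = 0 for all x ∈ D and u = f on the frontier ∂D; (ii) Δū = 0 on the open set D × I(λ) ⊆ ℝⁿ × ℝ and ū = f̄ on the frontier ∂(D × I(λ)). -/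
open scoped BigOperators

lemma second_dir {E : Type*} [NormedAddCommGroup E] [NormedSpace ℝ E] (F : E → ℝ)
    (p v : E) (hF : ContDiffAt ℝ 2 F p) :
    iteratedFDeriv ℝ 2 F p ![v, v] = fderiv ℝ (fun q => fderiv ℝ F q v) p v := by
  have hd : DifferentiableAt ℝ (fderiv ℝ F) p :=
    ((hF.fderiv_right (m := 1) (by norm_num)).differentiableAt one_ne_zero)
  have h : HasFDerivAt (fun q => fderiv ℝ F q v)
      ((fderiv ℝ F p).comp (0 : E →L[ℝ] E) + (fderiv ℝ (fderiv ℝ F) p).flip v) p :=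
    hd.hasFDerivAt.clm_apply (hasFDerivAt_const v p)
  rw [iteratedFDeriv_two_apply, h.fderiv]
  simp

section
variable {n : ℕ}
local notation "E" => EuclideanSpace ℝ (Fin n)

lemma duffin_lapProd (c : ℝ) (D : Set (EuclideanSpace ℝ (Fin n))) (hD : IsOpen D)
    (u : EuclideanSpace ℝ (Fin n) → ℝ) (hu : ContDiffOn ℝ 2 u D)
    (p : EuclideanSpace ℝ (Fin n) × ℝ) (hp : p.1 ∈ D) :
    lapProd (fun q => u q.1 * Real.cos (c * q.2)) p
      = Real.cos (c * p.2) * (lap u p.1 - c ^ 2 * u p.1) := by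
  set F : E × ℝ → ℝ := fun q => u q.1 * Real.cos (c * q.2) with hFdef
  have hu' : ∀ x ∈ D, ContDiffAt ℝ 2 u x := fun x hx => hu.contDiffAt (hD.mem_nhds hx)
  have hud : ∀ x ∈ D, DifferentiableAt ℝ u x := fun x hx =>
    (hu' x hx).differentiableAt (by norm_num)
  have hnhds : ∀ᶠ q : E × ℝ in nhds p, q.1 ∈ D := by
    have hmem : D ×ˢ (Set.univ : Set ℝ) ∈ nhds p :=
      (hD.prod isOpen_univ).mem_nhds ⟨hp, trivial⟩
    filter_upwards [hmem] with q hq using hq.1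
  have hcos : ∀ s : ℝ, HasDerivAt (fun t => Real.cos (c * t)) (-Real.sin (c * s) * c) s := by
    intro s
    simpa [Function.comp_def] using (Real.hasDerivAt_cos (c * s)).comp s ((hasDerivAt_id s).const_mul c)
  -- first derivative of F, applied to a vector
  have happ : ∀ q : E × ℝ, q.1 ∈ D → ∀ v : E × ℝ,
      fderiv ℝ F q v
        = u q.1 * (-Real.sin (c * q.2) * c * v.2) + Real.cos (c * q.2) * fderiv ℝ u q.1 v.1 := by
    intro q hq v
    have h1 : HasFDerivAt (fun q : E × ℝ => u q.1)
        ((fderiv ℝ u q.1).comp (ContinuousLinearMap.fst ℝ E ℝ)) q :=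
      ((hud q.1 hq).hasFDerivAt).comp q hasFDerivAt_fst
    have h2 : HasFDerivAt (fun q : E × ℝ => Real.cos (c * q.2))
        ((-Real.sin (c * q.2) * c) • (ContinuousLinearMap.snd ℝ E ℝ)) q :=
      (hcos q.2).comp_hasFDerivAt q hasFDerivAt_snd
    have hF1 : HasFDerivAt F
        (u q.1 • ((-Real.sin (c * q.2) * c) • (ContinuousLinearMap.snd ℝ E ℝ))
          + Real.cos (c * q.2) • ((fderiv ℝ u q.1).comp (ContinuousLinearMap.fst ℝ E ℝ))) q :=
      h1.mul h2
    rw [hF1.fderiv]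
    simp [mul_assoc]
  -- smoothness of F at p
  have hFc : ContDiffAt ℝ 2 F p := by
    have h1 : ContDiffAt ℝ 2 (fun q : E × ℝ => u q.1) p :=
      ContDiffAt.comp p (hu' p.1 hp) contDiffAt_fst
    have h2 : ContDiff ℝ 2 (fun q : E × ℝ => Real.cos (c * q.2)) :=
      ((Real.contDiff_cos.of_le le_top).comp (contDiff_const.mul contDiff_id)).comp contDiff_snd
    exact h1.mul h2.contDiffAt
  -- spatial second derivatives
  have hterm : ∀ i : Fin n,
      iteratedFDeriv ℝ 2 F p
          ![(EuclideanSpace.single i 1, (0 : ℝ)), (EuclideanSpace.single i 1, (0 : ℝ))]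
        = Real.cos (c * p.2)
            * iteratedFDeriv ℝ 2 u p.1 ![EuclideanSpace.single i 1, EuclideanSpace.single i 1] := by
    intro i
    set ei : E := EuclideanSpace.single i 1
    rw [second_dir F p (ei, (0 : ℝ)) hFc]
    have heq : (fun q : E × ℝ => fderiv ℝ F q (ei, (0 : ℝ)))
        =ᶠ[nhds p] fun q : E × ℝ => Real.cos (c * q.2) * fderiv ℝ u q.1 ei := by
      filter_upwards [hnhds] with q hq
      rw [happ q hq]
      simp
    rw [heq.fderiv_eq]
    have hdd : DifferentiableAt ℝ (fderiv ℝ u) p.1 :=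
      (((hu' p.1 hp).fderiv_right (m := 1) (by norm_num)).differentiableAt one_ne_zero)
    have hB : HasFDerivAt (fun x : E => fderiv ℝ u x ei)
        ((fderiv ℝ u p.1).comp (0 : E →L[ℝ] E) + (fderiv ℝ (fderiv ℝ u) p.1).flip ei) p.1 :=
      hdd.hasFDerivAt.clm_apply (hasFDerivAt_const ei p.1)
    have h2 : HasFDerivAt (fun q : E × ℝ => Real.cos (c * q.2))
        ((-Real.sin (c * p.2) * c) • (ContinuousLinearMap.snd ℝ E ℝ)) p :=
      (hcos p.2).comp_hasFDerivAt p hasFDerivAt_snd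
    have hprod : HasFDerivAt (fun q : E × ℝ => Real.cos (c * q.2) * fderiv ℝ u q.1 ei)
        (Real.cos (c * p.2) •
            (((fderiv ℝ u p.1).comp (0 : E →L[ℝ] E) + (fderiv ℝ (fderiv ℝ u) p.1).flip ei).comp
              (ContinuousLinearMap.fst ℝ E ℝ))
          + (fderiv ℝ u p.1 ei) • ((-Real.sin (c * p.2) * c) • (ContinuousLinearMap.snd ℝ E ℝ))) p :=
      h2.mul (hB.comp p hasFDerivAt_fst)
    rw [hprod.fderiv, iteratedFDeriv_two_apply]
    simp
  -- time second derivative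
  have htime :
      iteratedFDeriv ℝ 2 F p ![((0 : E), (1 : ℝ)), ((0 : E), (1 : ℝ))]
        = u p.1 * (-(Real.cos (c * p.2) * c) * c) := by
    rw [second_dir F p ((0 : E), (1 : ℝ)) hFc]
    have heq : (fun q : E × ℝ => fderiv ℝ F q ((0 : E), (1 : ℝ)))
        =ᶠ[nhds p] fun q : E × ℝ => u q.1 * (-Real.sin (c * q.2) * c) := by
      filter_upwards [hnhds] with q hq
      rw [happ q hq]
      simp
    rw [heq.fderiv_eq]
    have h1 : HasFDerivAt (fun q : E × ℝ => u q.1)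
        ((fderiv ℝ u p.1).comp (ContinuousLinearMap.fst ℝ E ℝ)) p :=
      ((hud p.1 hp).hasFDerivAt).comp p hasFDerivAt_fst
    have hsin : HasDerivAt (fun s : ℝ => -Real.sin (c * s) * c) (-(Real.cos (c * p.2) * c) * c) p.2 := by
      have := (((Real.hasDerivAt_sin (c * p.2)).comp p.2 ((hasDerivAt_id p.2).const_mul c)).neg).mul_const c
      simpa [mul_comm] using this
    have h2 : HasFDerivAt (fun q : E × ℝ => -Real.sin (c * q.2) * c)
        ((-(Real.cos (c * p.2) * c) * c) • (ContinuousLinearMap.snd ℝ E ℝ)) p :=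
      hsin.comp_hasFDerivAt p hasFDerivAt_snd
    have hprod : HasFDerivAt (fun q : E × ℝ => u q.1 * (-Real.sin (c * q.2) * c))
        (u p.1 • ((-(Real.cos (c * p.2) * c) * c) • (ContinuousLinearMap.snd ℝ E ℝ))
          + (-Real.sin (c * p.2) * c) •
              ((fderiv ℝ u p.1).comp (ContinuousLinearMap.fst ℝ E ℝ))) p :=
      h1.mul h2
    rw [hprod.fderiv]
    simp
  rw [lapProd, htime, Finset.sum_congr rfl (fun i _ => hterm i), ← Finset.mul_sum, lap]
  ring

end

theorem stmt8 {n : ℕ} (lam : ℝ) (hlam : 0 < lam) (D : Set (EuclideanSpace ℝ (Fin n)))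
    (hD : IsOpen D) (f u : EuclideanSpace ℝ (Fin n) → ℝ) (hu : ContDiffOn ℝ 2 u D) :
    ((∀ x ∈ D, (1 / 2) * lap u x - lam * u x = 0) ∧ ∀ y ∈ frontier D, u y = f y) ↔
      ((∀ p ∈ D ×ˢ Set.Ioo (-(Real.pi / (2 * Real.sqrt (2 * lam))))
            (Real.pi / (2 * Real.sqrt (2 * lam))),
          lapProd (fun q => u q.1 * Real.cos (Real.sqrt (2 * lam) * q.2)) p = 0) ∧
        ∀ p ∈ frontier (D ×ˢ Set.Ioo (-(Real.pi / (2 * Real.sqrt (2 * lam))))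
            (Real.pi / (2 * Real.sqrt (2 * lam)))),
          u p.1 * Real.cos (Real.sqrt (2 * lam) * p.2)
            = f p.1 * Real.cos (Real.sqrt (2 * lam) * p.2)) := by
  set c : ℝ := Real.sqrt (2 * lam) with hcdef
  have hc : 0 < c := Real.sqrt_pos.mpr (by linarith)
  have hc2 : c ^ 2 = 2 * lam := Real.sq_sqrt (by linarith)
  have hb : 0 < Real.pi / (2 * c) := by positivity
  have hlt : -(Real.pi / (2 * c)) < Real.pi / (2 * c) := by linarith
  have h0 : (0 : ℝ) ∈ Set.Ioo (-(Real.pi / (2 * c))) (Real.pi / (2 * c)) := ⟨by linarith, hb⟩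
  constructor
  · rintro ⟨h1, h2⟩
    constructor
    · rintro ⟨x, s⟩ ⟨hx, hs⟩
      rw [duffin_lapProd c D hD u hu (x, s) hx]
      have hz : lap u x - c ^ 2 * u x = 0 := by
        have := h1 x hx; rw [hc2]; linarith
      rw [hz, mul_zero]
    · rintro ⟨y, s⟩ hp
      rw [frontier_prod_eq] at hp
      rcases hp with ⟨hy, hs⟩ | ⟨hy, hs⟩
      · rw [frontier_Ioo hlt] at hs
        have hcos0 : Real.cos (c * s) = 0 := by
          have hmul : c * (Real.pi / (2 * c)) = Real.pi / 2 := by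
            field_simp
          rcases hs with rfl | rfl
          · rw [mul_neg, hmul, Real.cos_neg, Real.cos_pi_div_two]
          · rw [hmul, Real.cos_pi_div_two]
        simp [hcos0]
      · rw [h2 y hy]
  · rintro ⟨h1, h2⟩
    constructor
    · intro x hx
      have := h1 (x, 0) ⟨hx, h0⟩
      rw [duffin_lapProd c D hD u hu (x, 0) hx] at this
      rw [show c * (0 : ℝ) = 0 by ring, Real.cos_zero, one_mul, hc2] at this
      linarith
    · intro y hy
      have hmem : ((y, (0 : ℝ))) ∈ frontier (D ×ˢ Set.Ioo (-(Real.pi / (2 * c)))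
          (Real.pi / (2 * c))) := by
        rw [frontier_prod_eq]
        exact Set.mem_union_right _ ⟨hy, subset_closure h0⟩
      have := h2 (y, 0) hmem
      simpa using this
end

section
/- (Duffin correspondence, Helmholtz case, deterministic form.) Let λ < 0, let D ⊆ ℝⁿ be open, let f : ℝⁿ → ℝ, and let u : ℝⁿ → ℝ be twice continuously differentiable on D. Define ū(x,x') = u(x)·cosh(√(−2λ)·x') and f̄(y,y') = f(y)·cosh(√(−2λ)·y'). Then the following are equivalent: (i) (1/2)Δu(x) − λu(x) = 0 for all x ∈ D and u = f on the frontier ∂D; (ii) Δū = 0 on the open set D × ℝ ⊆ ℝⁿ × ℝ and ū = f̄ on the frontier ∂(D × ℝ). -/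
open scoped BigOperators

open ContinuousLinearMap in
lemma hasFDerivAt_mul_prod {E : Type*} [NormedAddCommGroup E] [NormedSpace ℝ E]
    {a : E → ℝ} {a' : E →L[ℝ] ℝ} {b : ℝ → ℝ} {b' : ℝ} {p : E × ℝ}
    (ha : HasFDerivAt a a' p.1) (hb : HasDerivAt b b' p.2) :
    HasFDerivAt (fun q : E × ℝ => a q.1 * b q.2)
      (b p.2 • a'.comp (fst ℝ E ℝ) + (a p.1 * b') • (snd ℝ E ℝ)) p := by
  have h1 : HasFDerivAt (fun q : E × ℝ => a q.1) (a'.comp (fst ℝ E ℝ)) p :=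
    ha.comp p (hasFDerivAt_fst)
  have h2 : HasFDerivAt (fun q : E × ℝ => b q.2)
      ((smulRight (1 : ℝ →L[ℝ] ℝ) b').comp (snd ℝ E ℝ)) p :=
    hb.hasFDerivAt.comp p (hasFDerivAt_snd)
  refine (h1.mul h2).congr_fderiv ?_
  ext v <;> simp [mul_comm]


section Key
variable {n : ℕ} {c : ℝ} {D : Set (EuclideanSpace ℝ (Fin n))}
    {u : EuclideanSpace ℝ (Fin n) → ℝ}

local notation "E" => EuclideanSpace ℝ (Fin n)

lemma second_deriv_formula (hD : IsOpen D) (hu : ContDiffOn ℝ 2 u D)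
    {p : E × ℝ} (hp : p.1 ∈ D) (v : E × ℝ) :
    iteratedFDeriv ℝ 2 (fun q : E × ℝ => u q.1 * Real.cosh (c * q.2)) p ![v, v]
      = Real.cosh (c * p.2) * (fderiv ℝ (fderiv ℝ u) p.1 v.1 v.1)
        + (2 * v.2) * (Real.sinh (c * p.2) * c) * fderiv ℝ u p.1 v.1
        + u p.1 * v.2 * v.2 * (c ^ 2 * Real.cosh (c * p.2)) := by
  set F : E × ℝ → ℝ := fun q => u q.1 * Real.cosh (c * q.2) with hFdef
  have hopen : IsOpen (D ×ˢ (Set.univ : Set ℝ)) := hD.prod isOpen_univ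
  have hpmem : p ∈ D ×ˢ (Set.univ : Set ℝ) := ⟨hp, trivial⟩
  -- differentiability of u
  have huD : DifferentiableOn ℝ u D := hu.differentiableOn (by norm_num)
  have hu' : ContDiffOn ℝ 1 (fderiv ℝ u) D := by
    have h2 : ContDiffOn ℝ (1 + 1) u D := by
      have : ((2 : ℕ) : WithTop ℕ∞) = 1 + 1 := by norm_num
      exact this ▸ hu
    exact ((contDiffOn_succ_iff_fderiv_of_isOpen hD).1 h2).2.2
  have hdu : ∀ x ∈ D, DifferentiableAt ℝ u x := fun x hx =>
    (huD x hx).differentiableAt (hD.mem_nhds hx)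
  have hdu' : DifferentiableAt ℝ (fderiv ℝ u) p.1 :=
    ((hu'.differentiableOn one_ne_zero) p.1 hp).differentiableAt (hD.mem_nhds hp)
  -- cosh derivative
  have hcosh : ∀ s : ℝ, HasDerivAt (fun t : ℝ => Real.cosh (c * t))
      (Real.sinh (c * s) * c) s := fun s => by
    have h0 : HasDerivAt (fun t : ℝ => c * t) c s := by
      simpa using (hasDerivAt_id s).const_mul c
    exact h0.cosh
  -- F is C^2 on D ×ˢ univ
  have hF2 : ContDiffOn ℝ 2 F (D ×ˢ (Set.univ : Set ℝ)) := by
    have h1 : ContDiffOn ℝ 2 (fun q : E × ℝ => u q.1) (D ×ˢ (Set.univ : Set ℝ)) :=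
      hu.comp contDiff_fst.contDiffOn (fun q hq => hq.1)
    have h2 : ContDiff ℝ 2 (fun q : E × ℝ => Real.cosh (c * q.2)) :=
      Real.contDiff_cosh.comp (contDiff_const.mul contDiff_snd)
    exact h1.mul h2.contDiffOn
  have hF' : ContDiffOn ℝ 1 (fderiv ℝ F) (D ×ˢ (Set.univ : Set ℝ)) :=
    by
    have h2 : ContDiffOn ℝ (1 + 1) F (D ×ˢ (Set.univ : Set ℝ)) := by
      have : ((2 : ℕ) : WithTop ℕ∞) = 1 + 1 := by norm_num
      exact this ▸ hF2
    exact ((contDiffOn_succ_iff_fderiv_of_isOpen hopen).1 h2).2.2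
  have hdF : DifferentiableAt ℝ (fderiv ℝ F) p :=
    ((hF'.differentiableOn one_ne_zero) p hpmem).differentiableAt (hopen.mem_nhds hpmem)
  -- formula for fderiv F on the open set
  have hfderivF : ∀ q ∈ D ×ˢ (Set.univ : Set ℝ), fderiv ℝ F q =
      Real.cosh (c * q.2) • (fderiv ℝ u q.1).comp (ContinuousLinearMap.fst ℝ E ℝ)
        + (u q.1 * (Real.sinh (c * q.2) * c)) • (ContinuousLinearMap.snd ℝ E ℝ) := by
    intro q hq
    exact (hasFDerivAt_mul_prod ((hdu q.1 hq.1).hasFDerivAt) (hcosh q.2)).fderiv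
  -- step 1 : turn iterated derivative into derivative of directional derivative
  rw [iteratedFDeriv_two_apply]
  simp only [Matrix.cons_val_zero, Matrix.cons_val_one, Matrix.head_cons]
  have step1 : fderiv ℝ (fderiv ℝ F) p v v = fderiv ℝ (fun q => fderiv ℝ F q v) p v := by
    rw [fderiv_clm_apply hdF (differentiableAt_const v)]
    simp
  -- step 2 : replace by explicit function ψ
  set ψ : E × ℝ → ℝ := fun q =>
    (fderiv ℝ u q.1 v.1) * Real.cosh (c * q.2) + u q.1 * (v.2 * Real.sinh (c * q.2) * c)
    with hψdef
  have heq : (fun q => fderiv ℝ F q v) =ᶠ[nhds p] ψ := by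
    filter_upwards [hopen.mem_nhds hpmem] with q hq
    rw [hfderivF q hq]
    simp [hψdef, ContinuousLinearMap.add_apply, ContinuousLinearMap.smul_apply,
      ContinuousLinearMap.comp_apply, smul_eq_mul]
    ring
  -- step 3 : compute the derivative of ψ
  have hA : HasFDerivAt (fun x : E => fderiv ℝ u x v.1)
      ((fderiv ℝ u p.1).comp (0 : E →L[ℝ] E) + (fderiv ℝ (fderiv ℝ u) p.1).flip v.1) p.1 := by
    simpa using hdu'.hasFDerivAt.clm_apply (hasFDerivAt_const v.1 p.1)
  have hb2 : HasDerivAt (fun s : ℝ => v.2 * Real.sinh (c * s) * c)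
      (v.2 * (Real.cosh (c * p.2) * c) * c) p.2 := by
    have h0 : HasDerivAt (fun t : ℝ => c * t) c p.2 := by
      simpa using (hasDerivAt_id p.2).const_mul c
    exact ((h0.sinh).const_mul v.2).mul_const c
  have hΨ : HasFDerivAt ψ _ p :=
    (hasFDerivAt_mul_prod hA (hcosh p.2)).add
      (hasFDerivAt_mul_prod ((hdu p.1 hp).hasFDerivAt) hb2)
  rw [step1, heq.fderiv_eq, hΨ.fderiv]
  simp [ContinuousLinearMap.add_apply, ContinuousLinearMap.smul_apply,
    ContinuousLinearMap.comp_apply, smul_eq_mul]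
  ring

end Key

section Key2
variable {n : ℕ} {c : ℝ} {D : Set (EuclideanSpace ℝ (Fin n))}
    {u : EuclideanSpace ℝ (Fin n) → ℝ}
local notation "E" => EuclideanSpace ℝ (Fin n)

lemma lapProd_formula (hD : IsOpen D) (hu : ContDiffOn ℝ 2 u D)
    {p : E × ℝ} (hp : p.1 ∈ D) :
    lapProd (fun q : E × ℝ => u q.1 * Real.cosh (c * q.2)) p
      = (lap u p.1 + c ^ 2 * u p.1) * Real.cosh (c * p.2) := by
  have h1 : ∀ i : Fin n,
      iteratedFDeriv ℝ 2 (fun q : E × ℝ => u q.1 * Real.cosh (c * q.2)) p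
        ![(EuclideanSpace.single i 1, (0 : ℝ)), (EuclideanSpace.single i 1, (0 : ℝ))]
      = Real.cosh (c * p.2) * iteratedFDeriv ℝ 2 u p.1
          ![EuclideanSpace.single i 1, EuclideanSpace.single i 1] := by
    intro i
    rw [second_deriv_formula hD hu hp (EuclideanSpace.single i 1, (0 : ℝ)),
      iteratedFDeriv_two_apply]
    simp
  have h2 : iteratedFDeriv ℝ 2 (fun q : E × ℝ => u q.1 * Real.cosh (c * q.2)) p
        ![((0 : E), (1 : ℝ)), ((0 : E), (1 : ℝ))]
      = u p.1 * (c ^ 2 * Real.cosh (c * p.2)) := by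
    rw [second_deriv_formula hD hu hp ((0 : E), (1 : ℝ))]
    simp
  rw [lapProd, h2, Finset.sum_congr rfl (fun i _ => h1 i), ← Finset.mul_sum, lap]
  ring

end Key2

theorem stmt9 {n : ℕ} (lam : ℝ) (hlam : lam < 0) (D : Set (EuclideanSpace ℝ (Fin n)))
    (hD : IsOpen D) (f u : EuclideanSpace ℝ (Fin n) → ℝ) (hu : ContDiffOn ℝ 2 u D) :
    ((∀ x ∈ D, (1 / 2) * lap u x - lam * u x = 0) ∧ ∀ y ∈ frontier D, u y = f y) ↔
      ((∀ p ∈ D ×ˢ (Set.univ : Set ℝ),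
          lapProd (fun q => u q.1 * Real.cosh (Real.sqrt (-(2 * lam)) * q.2)) p = 0) ∧
        ∀ p ∈ frontier (D ×ˢ (Set.univ : Set ℝ)),
          u p.1 * Real.cosh (Real.sqrt (-(2 * lam)) * p.2)
            = f p.1 * Real.cosh (Real.sqrt (-(2 * lam)) * p.2)) := by
  set c : ℝ := Real.sqrt (-(2 * lam)) with hcdef
  have hc2 : c ^ 2 = -(2 * lam) := Real.sq_sqrt (by linarith)
  constructor
  · rintro ⟨hpde, hbd⟩
    constructor
    · intro p hp
      rw [lapProd_formula hD hu hp.1]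
      have h := hpde p.1 hp.1
      have : lap u p.1 + c ^ 2 * u p.1 = 0 := by rw [hc2]; linarith
      rw [this, zero_mul]
    · intro p hp
      rw [frontier_prod_univ_eq] at hp
      rw [hbd p.1 hp.1]
  · rintro ⟨hpde, hbd⟩
    constructor
    · intro x hx
      have h := hpde (x, 0) ⟨hx, trivial⟩
      rw [lapProd_formula hD hu hx] at h
      simp only [mul_zero, Real.cosh_zero, mul_one] at h
      rw [hc2] at h
      linarith
    · intro y hy
      have h := hbd (y, 0) (by rw [frontier_prod_univ_eq]; exact ⟨hy, trivial⟩)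
      simpa using h
end

section
/- Let n ≥ 1 and let γ be the standard Gaussian probability measure on the Euclidean space ℝⁿ (the law of a vector of n independent standard normal random variables). Let N : ℝⁿ → ℝⁿ be the normalization map N(x) = ‖x‖⁻¹·x (with N(0) = 0). Then the pushforward measure ν = N_*γ is a probability measure, ν-almost every point lies on the unit sphere {x : ‖x‖ = 1}, and ν is invariant under every linear isometry equivalence R of ℝⁿ, i.e. R_*ν = ν. -/
open MeasureTheory ProbabilityTheory Real ENNReal

-- Fubini for lintegral over pi measure
lemma aux_lintegral_pi {n : ℕ} {E : Fin n → Type*}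
    [∀ i, MeasureSpace (E i)] [∀ i, SigmaFinite (volume : Measure (E i))]
    (g : ∀ i, E i → ℝ≥0∞) (hg : ∀ i, Measurable (g i)) :
    ∫⁻ x : ∀ i, E i, ∏ i, g i (x i) ∂(Measure.pi fun _ => volume) = ∏ i, ∫⁻ y, g i y := by
  induction n with
  | zero => simp [Measure.pi_univ]
  | succ n n_ih =>
      have hmeas : Measurable fun x : ∀ i, E i => ∏ i, g i (x i) :=
        Finset.measurable_prod _ fun i _ => (hg i).comp (measurable_pi_apply i)
      rw [← ((measurePreserving_piFinSuccAbove (fun i => (volume : Measure (E i)))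
        0).symm).lintegral_comp hmeas]
      simp_rw [MeasurableEquiv.piFinSuccAbove_symm_apply, Fin.insertNthEquiv,
        Fin.prod_univ_succ, Fin.insertNth_zero, Equiv.coe_fn_mk, Fin.cons_succ,
        Fin.cons_zero]
      erw [lintegral_prod_mul (f := g 0)
            (g := fun y : ∀ j : Fin n, E (Fin.succ j) => ∏ i : Fin n, g i.succ (y i))
            (ν := Measure.pi fun j : Fin n => (volume : Measure (E j.succ)))
            (hg 0).aemeasurable
            (Finset.measurable_prod Finset.univ fun (i : Fin n) _ =>
              ((hg i.succ).comp (measurable_pi_apply i))).aemeasurable,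
          n_ih _ (fun i => hg i.succ)]

lemma aux_map_withDensity {α β : Type*} [MeasurableSpace α] [MeasurableSpace β]
    {f : α → β} (hf : Measurable f) (μ : Measure α) {g : β → ℝ≥0∞} (hg : Measurable g) :
    Measure.map f (μ.withDensity (g ∘ f)) = (Measure.map f μ).withDensity g := by
  ext s hs
  rw [Measure.map_apply hf hs, withDensity_apply _ hs, withDensity_apply _ (hf hs),
    setLIntegral_map hs hg hf]
  rfl

lemma aux_pi_gauss (n : ℕ) :
    (Measure.pi fun _ : Fin n => gaussianReal 0 1) =
      (Measure.pi fun _ : Fin n => (volume : Measure ℝ)).withDensity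
        (fun x => ∏ i, gaussianPDF 0 1 (x i)) := by
  refine Measure.pi_eq fun s hs => ?_
  rw [withDensity_apply _ (MeasurableSet.univ_pi hs),
    ← lintegral_indicator (MeasurableSet.univ_pi hs)]
  have hind : ∀ x : Fin n → ℝ,
      (Set.univ.pi s).indicator (fun x => ∏ i, gaussianPDF 0 1 (x i)) x
        = ∏ i, (s i).indicator (gaussianPDF 0 1) (x i) := by
    intro x
    by_cases hx : x ∈ Set.univ.pi s
    · rw [Set.indicator_of_mem hx]
      exact Finset.prod_congr rfl fun i _ =>
        (Set.indicator_of_mem (hx i (Set.mem_univ i)) _).symm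
    · rw [Set.indicator_of_notMem hx]
      rw [Set.mem_univ_pi] at hx
      push_neg at hx
      obtain ⟨i, hi⟩ := hx
      exact (Finset.prod_eq_zero (Finset.mem_univ i)
        (Set.indicator_of_notMem hi _)).symm
  simp_rw [hind]
  rw [aux_lintegral_pi _ (fun i => (measurable_gaussianPDF 0 1).indicator (hs i))]
  refine Finset.prod_congr rfl fun i _ => ?_
  rw [lintegral_indicator (hs i), gaussianReal_of_var_ne_zero 0 one_ne_zero,
    withDensity_apply _ (hs i)]

noncomputable def gaussDens (n : ℕ) (x : EuclideanSpace ℝ (Fin n)) : ℝ≥0∞ :=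
  ENNReal.ofReal ((Real.sqrt (2 * π))⁻¹ ^ n * Real.exp (-‖x‖ ^ 2 / 2))

lemma gaussDens_measurable (n : ℕ) : Measurable (gaussDens n) := by
  apply Measurable.ennreal_ofReal
  fun_prop

lemma aux_gauss_euclidean (n : ℕ) :
    Measure.map (MeasurableEquiv.toLp 2 (Fin n → ℝ))
        (Measure.pi fun _ : Fin n => gaussianReal 0 1)
      = (volume : Measure (EuclideanSpace ℝ (Fin n))).withDensity (gaussDens n) := by
  set e := (MeasurableEquiv.toLp 2 (Fin n → ℝ)).symm
  have hF : (fun y : Fin n → ℝ => ∏ i, gaussianPDF 0 1 (y i)) = gaussDens n ∘ e.symm := by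
    funext y
    have h1 : ∀ i : Fin n, gaussianPDFReal 0 1 (y i)
        = (Real.sqrt (2 * π))⁻¹ * Real.exp (-(y i) ^ 2 / 2) := by
      intro i
      simp [gaussianPDFReal]
    have h2 : ‖e.symm y‖ ^ 2 = ∑ i, y i ^ 2 := by
      rw [EuclideanSpace.norm_eq, Real.sq_sqrt (Finset.sum_nonneg fun i _ => sq_nonneg _)]
      exact Finset.sum_congr rfl fun i _ => by rw [Real.norm_eq_abs, sq_abs]; rfl
    simp only [gaussianPDF, Function.comp_apply, gaussDens, h2]
    rw [← ENNReal.ofReal_prod_of_nonneg (fun i _ => gaussianPDFReal_nonneg 0 1 (y i))]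
    congr 1
    simp_rw [h1]
    rw [Finset.prod_mul_distrib, Finset.prod_const, ← Real.exp_sum, Finset.card_univ,
      Fintype.card_fin]
    congr 1
    rw [← Finset.sum_div]
    simp
  rw [aux_pi_gauss, hF, ← MeasurableEquiv.symm_symm (MeasurableEquiv.toLp 2 (Fin n → ℝ)),
    aux_map_withDensity e.symm.measurable _ (gaussDens_measurable n),
    ← volume_pi, ((EuclideanSpace.volume_preserving_symm_measurableEquiv_toLp (Fin n)).symm _).map_eq]

theorem stmt12 (n : ℕ) (hn : 1 ≤ n)
    (γ : Measure (EuclideanSpace ℝ (Fin n)))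
    (hγ : γ = Measure.map (MeasurableEquiv.toLp 2 (Fin n → ℝ))
        (Measure.pi fun _ : Fin n => gaussianReal 0 1))
    (N : EuclideanSpace ℝ (Fin n) → EuclideanSpace ℝ (Fin n))
    (hN : ∀ x, N x = ‖x‖⁻¹ • x)
    (ν : Measure (EuclideanSpace ℝ (Fin n))) (hν : ν = Measure.map N γ) :
    IsProbabilityMeasure ν ∧ (∀ᵐ x ∂ν, ‖x‖ = 1) ∧
      ∀ R : EuclideanSpace ℝ (Fin n) ≃ₗᵢ[ℝ] EuclideanSpace ℝ (Fin n),
        Measure.map R ν = ν := by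
  have hNmeas : Measurable N := by
    have h : N = fun x => ‖x‖⁻¹ • x := funext hN
    rw [h]
    exact measurable_norm.inv.smul measurable_id
  have hγd : γ = (volume : Measure (EuclideanSpace ℝ (Fin n))).withDensity (gaussDens n) := by
    rw [hγ, aux_gauss_euclidean]
  haveI : IsProbabilityMeasure γ := by
    rw [hγ]
    exact Measure.isProbabilityMeasure_map (MeasurableEquiv.measurable _).aemeasurable
  haveI hνprob : IsProbabilityMeasure ν := by
    rw [hν]
    exact Measure.isProbabilityMeasure_map hNmeas.aemeasurable
  haveI : Nonempty (Fin n) := ⟨⟨0, hn⟩⟩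
  haveI : Nontrivial (EuclideanSpace ℝ (Fin n)) := inferInstance
  have hγ0 : ∀ᵐ x ∂γ, x ≠ 0 := by
    rw [ae_iff]
    have h0 : {x : EuclideanSpace ℝ (Fin n) | ¬x ≠ 0} = {0} := by
      ext x; simp
    rw [h0, hγd]
    exact (withDensity_absolutelyContinuous _ _) (measure_singleton 0)
  refine ⟨hνprob, ?_, ?_⟩
  · rw [hν, ae_map_iff hNmeas.aemeasurable
      ((isClosed_eq continuous_norm continuous_const).measurableSet)]
    filter_upwards [hγ0] with x hx
    have hx' : ‖x‖ ≠ 0 := norm_ne_zero_iff.mpr hx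
    simp only [Set.mem_setOf_eq, hN, norm_smul, norm_inv, norm_norm]
    exact inv_mul_cancel₀ hx'
  · intro R
    have hRγ : Measure.map R γ = γ := by
      rw [hγd]
      have hGR : gaussDens n ∘ ⇑R = gaussDens n := by
        funext x
        simp [gaussDens, R.norm_map]
      calc Measure.map R (volume.withDensity (gaussDens n))
          = Measure.map R (volume.withDensity (gaussDens n ∘ ⇑R)) := by rw [hGR]
        _ = (Measure.map R volume).withDensity (gaussDens n) :=
            aux_map_withDensity R.continuous.measurable _ (gaussDens_measurable n)
        _ = volume.withDensity (gaussDens n) := by rw [R.measurePreserving.map_eq]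
    have hcomm : ⇑R ∘ N = N ∘ ⇑R := by
      funext x
      simp only [Function.comp_apply, hN, R.norm_map]
      exact R.map_smul _ _
    rw [hν, Measure.map_map R.continuous.measurable hNmeas, hcomm,
      ← Measure.map_map hNmeas R.continuous.measurable, hRγ]
end
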